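/- Let C be a Grothendieck category and L₁, L₂ stable localizing subcategories with L₁ ∩ L₂ = 0. Then for every object X of C, t_{L₁∨L₂}(X) = t_{L₁}(X) ⊕ t_{L₂}(X), and t_{L₁}(t_{L₂}(X)) = 0 = t_{L₂}(t_{L₁}(X)). -/

import Mathlib

open CategoryTheory Limits

universe w v u u₂ u₃ u₄ u₅

namespace CentralSheaf

variable {C : Type u} [Category.{v} C] [Abelian C]

/-- A monomorphism is essential if every morphism whose precomposition with it
is a monomorphism is itself a monomorphism. -/
def IsEssentialMono {X Y : C} (f : X ⟶ Y) : Prop :=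
  Mono f ∧ ∀ ⦃Z : C⦄ (g : Y ⟶ Z), Mono (f ≫ g) → Mono g

/-- A Serre subcategory of an abelian category, given as a predicate on objects:
it contains the zero objects and is closed under isomorphisms, subobjects,
quotient objects and extensions. -/
structure IsSerre (P : C → Prop) : Prop where
  zero : ∀ X : C, IsZero X → P X
  iso : ∀ {X Y : C}, (X ≅ Y) → P X → P Y
  sub : ∀ {X Y : C} (f : X ⟶ Y), Mono f → P Y → P X
  quot : ∀ {X Y : C} (f : X ⟶ Y), Epi f → P X → P Y
  ext : ∀ S : ShortComplex C, S.ShortExact → P S.X₁ → P S.X₃ → P S.X₂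

/-- A localizing subcategory: a Serre subcategory closed under arbitrary direct sums. -/
structure IsLocalizing (P : C → Prop) extends IsSerre P : Prop where
  sums : ∀ {ι : Type v} (X : ι → C) (c : Cofan X), IsColimit c → (∀ i, P (X i)) → P c.pt

/-- Stability: closure under essential extensions. -/
def IsStable (P : C → Prop) : Prop :=
  ∀ {X Y : C} (f : X ⟶ Y), IsEssentialMono f → P X → P Y

/-- A stable localizing subcategory. -/
structure IsStableLocalizing (P : C → Prop) extends IsLocalizing P : Prop where
  stable : IsStable P

/-- Data exhibiting `D` as the Gabriel quotient `C/P` of `C` by the localizing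
subcategory `P`: an exact quotient functor `T` with fully faithful right adjoint
(section functor) `S`, whose kernel is exactly `P`. -/
structure QuotientData (P : C → Prop) (D : Type u₂) [Category.{v} D] [Abelian D] where
  T : C ⥤ D
  S : D ⥤ C
  adj : T ⊣ S
  additive : T.Additive
  preservesFiniteLimits : PreservesFiniteLimits T
  fullS : S.Full
  faithfulS : S.Faithful
  ker : ∀ X : C, P X ↔ IsZero (T.obj X)

/-- `t` is the `P`-torsion subobject of its ambient object: it lies in `P` and
contains every subobject lying in `P`. -/
def IsTorsionSubobject (P : C → Prop) {X : C} (t : Subobject X) : Prop :=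
  P ((t : C)) ∧ ∀ s : Subobject X, P ((s : C)) → s ≤ t

/-- `P₃` is the smallest localizing subcategory containing `P₁` and `P₂`. -/
def IsJoin (P₁ P₂ P₃ : C → Prop) : Prop :=
  IsLocalizing P₃ ∧ (∀ X, P₁ X → P₃ X) ∧ (∀ X, P₂ X → P₃ X) ∧
    ∀ Q : C → Prop, IsLocalizing Q → (∀ X, P₁ X → Q X) → (∀ X, P₂ X → Q X) →
      ∀ X, P₃ X → Q X

/-- An object is noetherian if its subobjects satisfy the ascending chain condition. -/
def IsNoetherianObject (X : C) : Prop := WellFoundedGT (Subobject X)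

/-- A Grothendieck category is locally noetherian if it has a (separating) set of
noetherian generators. -/
def IsLocallyNoetherian (C : Type u) [Category.{v} C] [Abelian C] : Prop :=
  ∃ 𝒢 : Set C, ObjectProperty.IsSeparating (fun G : C => G ∈ 𝒢) ∧ ∀ G ∈ 𝒢, IsNoetherianObject G


/-! ### Auxiliary lemmas -/

section Aux

set_option linter.unusedSectionVars false

open scoped Pseudoelement
open CategoryTheory.Abelian.Pseudoelement

variable {P P' P₁ P₂ : C → Prop}

lemma aux_eq_bot_of_isZero {X : C} (s : Subobject X) (h : IsZero ((s : C))) : s = ⊥ := by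
  rw [← Subobject.mk_arrow s, Subobject.mk_eq_bot_iff_zero]
  exact h.eq_of_src _ _

lemma aux_isZero_of_epi_zero {W V : C} (f : W ⟶ V) [Epi f] (h : f = 0) : IsZero V := by
  rw [IsZero.iff_id_eq_zero, ← cancel_epi f, h]; simp

lemma aux_le_of_comp_cokernel_π_eq_zero {X : C} {s t : Subobject X}
    (h : s.arrow ≫ cokernel.π t.arrow = 0) : s ≤ t :=
  Subobject.le_of_comm (Abelian.monoLift t.arrow s.arrow h) (Abelian.monoLift_comp _ _ _)

lemma aux_mk_arrow_comp {X A : C} (f : A ⟶ X) [Mono f] {W : C} (g : X ⟶ W) :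
    (Subobject.mk f).arrow ≫ g = (Subobject.underlyingIso f).hom ≫ f ≫ g := by
  rw [← Subobject.underlyingIso_hom_comp_eq_mk, Category.assoc]

lemma aux_sup_arrow_comp_eq_zero {Y W : C} {v₁ v₂ : Subobject Y} {f : Y ⟶ W}
    (h₁ : v₁.arrow ≫ f = 0) (h₂ : v₂.arrow ≫ f = 0) : (v₁ ⊔ v₂).arrow ≫ f = 0 := by
  have hv₁ : v₁ ≤ Subobject.mk (kernel.ι f) :=
    Subobject.le_mk_of_comm (kernel.lift f v₁.arrow h₁) (kernel.lift_ι _ _ _)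
  have hv₂ : v₂ ≤ Subobject.mk (kernel.ι f) :=
    Subobject.le_mk_of_comm (kernel.lift f v₂.arrow h₂) (kernel.lift_ι _ _ _)
  have hsup : v₁ ⊔ v₂ ≤ Subobject.mk (kernel.ι f) := sup_le hv₁ hv₂
  rw [← Subobject.ofLE_arrow hsup, Category.assoc, aux_mk_arrow_comp, kernel.condition,
    comp_zero, comp_zero]

lemma aux_mono_of_kernel_ι_eq_zero {X Y : C} (f : X ⟶ Y) (h : kernel.ι f = 0) : Mono f := by
  apply mono_of_zero_of_map_zero
  intro a ha
  obtain ⟨b, hb⟩ := pseudo_exact_of_exact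
    (S := ShortComplex.mk (kernel.ι f) f (kernel.condition f))
    (ShortComplex.exact_of_f_is_kernel _ (kernelIsKernel f)) a ha
  have hb' : pseudoApply (kernel.ι f) b = a := hb
  rw [← hb', h, Abelian.Pseudoelement.zero_apply]

/-- The canonical isomorphism `kernel (pullback.fst f g) ≅ kernel g`. -/
noncomputable def auxKernelPullbackFstIso {X Y Z : C} (f : X ⟶ Z) (g : Y ⟶ Z) :
    kernel (pullback.fst f g) ≅ kernel g := by
  let q : kernel g ⟶ pullback f g :=
    pullback.lift 0 (kernel.ι g) (by rw [zero_comp, kernel.condition])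
  have hq1 : q ≫ pullback.fst f g = 0 := pullback.lift_fst _ _ _
  have hq2 : q ≫ pullback.snd f g = kernel.ι g := pullback.lift_snd _ _ _
  have hqmono : Mono q := by
    have : Mono (q ≫ pullback.snd f g) := by rw [hq2]; infer_instance
    exact mono_of_mono q (pullback.snd f g)
  refine IsLimit.conePointUniqueUpToIso (kernelIsKernel (pullback.fst f g))
    (KernelFork.IsLimit.ofι q hq1
      (fun {W'} k hk => kernel.lift g (k ≫ pullback.snd f g)
        (by rw [Category.assoc, ← pullback.condition, ← Category.assoc, hk, zero_comp]))
      (fun {W'} k hk => ?_) (fun {W'} k hk m hm => ?_))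
  · apply pullback.hom_ext
    · rw [Category.assoc, hq1, comp_zero, hk]
    · rw [Category.assoc, hq2, kernel.lift_ι]
  · rw [← cancel_mono q]
    beta_reduce
    apply pullback.hom_ext
    · rw [Category.assoc, Category.assoc, hq1, comp_zero, comp_zero]
    · rw [Category.assoc, Category.assoc, hq2, kernel.lift_ι, ← hm, Category.assoc, hq2]

/-- For a mono `m`, the kernel of its cokernel projection recovers the source. -/
noncomputable def auxKernelCokernelπIso {Z Y : C} (m : Z ⟶ Y) [Mono m] :
    kernel (cokernel.π m) ≅ Z :=
  IsLimit.conePointUniqueUpToIso (kernelIsKernel (cokernel.π m))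
    (Abelian.monoIsKernelOfCokernel (CokernelCofork.ofπ (cokernel.π m) (cokernel.condition m))
      (cokernelIsCokernel m))

lemma aux_pullback_snd_comp_cokernel_π {X Y Z : C} (f : X ⟶ Z) (g : Y ⟶ Z) :
    pullback.snd f g ≫ g ≫ cokernel.π f = 0 := by
  rw [← Category.assoc, ← pullback.condition, Category.assoc, cokernel.condition, comp_zero]

lemma aux_mono_cokernel_desc_pullback {X Y Z : C} (f : X ⟶ Z) (g : Y ⟶ Z) :
    Mono (cokernel.desc (pullback.snd f g) (g ≫ cokernel.π f)
      (aux_pullback_snd_comp_cokernel_π f g)) := by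
  apply mono_of_zero_of_map_zero
  intro x hx
  obtain ⟨y, hy⟩ := pseudo_surjective_of_epi (cokernel.π (pullback.snd f g)) x
  have h1 : (cokernel.π f : Z ⟶ cokernel f) ((g : Y ⟶ Z) y) = 0 := by
    rw [← Abelian.Pseudoelement.comp_apply, ← cokernel.π_desc (pullback.snd f g)
      (g ≫ cokernel.π f) (aux_pullback_snd_comp_cokernel_π f g),
      Abelian.Pseudoelement.comp_apply, hy, hx]
  obtain ⟨a, ha⟩ := pseudo_exact_of_exact
    (S := ShortComplex.mk f (cokernel.π f) (cokernel.condition f))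
    (ShortComplex.exact_of_g_is_cokernel _ (cokernelIsCokernel f)) _ h1
  obtain ⟨c, hc1, hc2⟩ := pseudo_pullback (f := f) (g := g) (p := a) (q := y) (by rw [ha])
  rw [← hy, ← hc2, ← Abelian.Pseudoelement.comp_apply, cokernel.condition, Abelian.Pseudoelement.zero_apply]

/-- Cokernel of a pullback of `f` along an epi is the cokernel of `f`. -/
noncomputable def auxCokernelPullbackSndIso {X Y Z : C} (f : X ⟶ Z) (g : Y ⟶ Z) [Epi g] :
    cokernel (pullback.snd f g) ≅ cokernel f := by
  have := aux_mono_cokernel_desc_pullback f g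
  have hepi : Epi (cokernel.desc (pullback.snd f g) (g ≫ cokernel.π f)
      (aux_pullback_snd_comp_cokernel_π f g)) := by
    have h : Epi (cokernel.π (pullback.snd f g) ≫ cokernel.desc (pullback.snd f g)
        (g ≫ cokernel.π f) (aux_pullback_snd_comp_cokernel_π f g)) := by
      rw [cokernel.π_desc]; exact epi_comp _ _
    exact @epi_of_epi _ _ _ _ _ _ _ h
  have := isIso_of_mono_of_epi (cokernel.desc (pullback.snd f g) (g ≫ cokernel.π f)
      (aux_pullback_snd_comp_cokernel_π f g))
  exact asIso (cokernel.desc (pullback.snd f g) (g ≫ cokernel.π f)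
      (aux_pullback_snd_comp_cokernel_π f g))

lemma aux_mono_comp_cokernel_π (hP : IsSerre P) (hP' : IsSerre P')
    (hdisj : ∀ X : C, P X → P' X → IsZero X)
    {E S : C} (t : Subobject E) (ht : P ((t : C))) (m : S ⟶ E) [Mono m] (hS : P' S) :
    Mono (m ≫ cokernel.π t.arrow) := by
  apply aux_mono_of_kernel_ι_eq_zero
  set χ := m ≫ cokernel.π t.arrow with hχdef
  have h0 : (kernel.ι χ ≫ m) ≫ cokernel.π t.arrow = 0 := by
    rw [Category.assoc, ← hχdef, kernel.condition]
  set u := Abelian.monoLift t.arrow (kernel.ι χ ≫ m) h0 with hudef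
  have hufac : u ≫ t.arrow = kernel.ι χ ≫ m := Abelian.monoLift_comp _ _ _
  have humono : Mono u := by
    have : Mono (u ≫ t.arrow) := by rw [hufac]; exact mono_comp _ _
    exact mono_of_mono u t.arrow
  have hPker : P (kernel χ) := hP.sub u humono ht
  have hP'ker : P' (kernel χ) := hP'.sub (kernel.ι χ) inferInstance hS
  exact (hdisj _ hPker hP'ker).eq_of_src _ _

lemma aux_torsionfree (hP : IsLocalizing P) {E : C}
    (t : Subobject E) (ht : IsTorsionSubobject P t)
    {W : C} (w : W ⟶ cokernel t.arrow) [Mono w] (hW : P W) : IsZero W := by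
  have hfst : Epi (pullback.fst w (cokernel.π t.arrow)) := by infer_instance
  have hker : P (kernel (pullback.fst w (cokernel.π t.arrow))) :=
    hP.iso ((auxKernelPullbackFstIso w (cokernel.π t.arrow)).trans
      (auxKernelCokernelπIso t.arrow)).symm ht.1
  have hSE : (ShortComplex.mk (kernel.ι (pullback.fst w (cokernel.π t.arrow)))
      (pullback.fst w (cokernel.π t.arrow)) (kernel.condition _)).ShortExact :=
    ShortComplex.ShortExact.mk' (ShortComplex.exact_of_f_is_kernel _ (kernelIsKernel _))
      inferInstance hfst
  have hPB : P (pullback w (cokernel.π t.arrow)) := hP.ext _ hSE hker hW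
  have hle : Subobject.mk (pullback.snd w (cokernel.π t.arrow)) ≤ t :=
    ht.2 _ (hP.iso (Subobject.underlyingIso (pullback.snd w (cokernel.π t.arrow))).symm hPB)
  have hfac : pullback.snd w (cokernel.π t.arrow) = Subobject.ofMkLE _ t hle ≫ t.arrow :=
    (Subobject.ofMkLE_arrow hle).symm
  have h0 : pullback.fst w (cokernel.π t.arrow) ≫ w = 0 := by
    rw [pullback.condition, hfac, Category.assoc, cokernel.condition, comp_zero]
  exact aux_isZero_of_epi_zero (pullback.fst w (cokernel.π t.arrow)) (zero_of_comp_mono w h0)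

lemma aux_absorb (hP : IsStableLocalizing P) (hP' : IsSerre P')
    {S M : C} (m : S ⟶ M) [Mono m] (hS : P S) (hcok : P' (cokernel m))
    (TF : ∀ (W : C) (w : W ⟶ M), Mono w → P' W → IsZero W) : P M := by
  refine hP.stable m ⟨inferInstance, ?_⟩ hS
  intro W' g hmg
  set χ := kernel.ι g ≫ cokernel.π m with hχdef
  have hχ : Mono χ := by
    apply aux_mono_of_kernel_ι_eq_zero
    have h0 : (kernel.ι χ ≫ kernel.ι g) ≫ cokernel.π m = 0 := by
      rw [Category.assoc, ← hχdef, kernel.condition]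
    set u := Abelian.monoLift m (kernel.ι χ ≫ kernel.ι g) h0 with hudef
    have hufac : u ≫ m = kernel.ι χ ≫ kernel.ι g := Abelian.monoLift_comp _ _ _
    have hu0 : u = 0 := by
      haveI := hmg
      apply zero_of_comp_mono (m ≫ g)
      rw [← Category.assoc, hufac, Category.assoc, kernel.condition, comp_zero]
    have hz : kernel.ι χ ≫ kernel.ι g = 0 := by rw [← hufac, hu0, zero_comp]
    exact zero_of_comp_mono (kernel.ι g) hz
  have hker : P' (kernel g) := hP'.sub χ hχ hcok
  have hz : IsZero (kernel g) := TF _ (kernel.ι g) inferInstance hker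
  exact aux_mono_of_kernel_ι_eq_zero g (hz.eq_of_src _ _)

lemma aux_exists_torsion [HasColimits C] [WellPowered.{v} C] (hP : IsLocalizing P) (Y : C) :
    ∃ t : Subobject Y, IsTorsionSubobject P t := by
  let S := {s : Subobject Y // P ((s : C))}
  haveI : Small.{v} S := small_of_injective (Subtype.val_injective)
  let e : Shrink.{v} S ≃ S := (equivShrink S).symm
  let F : Shrink.{v} S → C := fun i => ((e i : Subobject Y) : C)
  let g : (∐ F) ⟶ Y := Sigma.desc (fun i => (e i).1.arrow)
  refine ⟨Subobject.mk (Abelian.image.ι g), ?_, ?_⟩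
  · have hsum : P (∐ F) :=
      hP.sums F (Cofan.mk (∐ F) (Sigma.ι F)) (coproductIsCoproduct F) (fun i => (e i).2)
    exact hP.iso (Subobject.underlyingIso _).symm
      (hP.quot (Abelian.factorThruImage g) inferInstance hsum)
  · intro s hs
    have hall : ∀ i : Shrink.{v} S, (e i).1 ≤ Subobject.mk (Abelian.image.ι g) := by
      intro i
      refine Subobject.le_mk_of_comm (Sigma.ι F i ≫ Abelian.factorThruImage g) ?_
      rw [Category.assoc, Abelian.image.fac g]
      exact Sigma.ι_desc _ _
    have h0 : e (equivShrink S ⟨s, hs⟩) = ⟨s, hs⟩ := (equivShrink S).symm_apply_apply _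
    have := hall (equivShrink S ⟨s, hs⟩)
    rw [h0] at this
    exact this


/-- The class of extensions of a `P₂`-quotient by a `P₁`-subobject. -/
def QP (P₁ P₂ : C → Prop) : C → Prop :=
  fun Y => ∃ (Z : C) (f : Z ⟶ Y), Mono f ∧ P₁ Z ∧ P₂ (cokernel f)

lemma qp_iso (h₂ : IsSerre P₂) {X Y : C} (e : X ≅ Y) (hQ : QP P₁ P₂ X) : QP P₁ P₂ Y := by
  obtain ⟨Z, f, hf, hZ, hc⟩ := hQ
  haveI := hf
  exact ⟨Z, f ≫ e.hom, mono_comp _ _, hZ, h₂.iso (cokernelCompIsIso f e.hom).symm hc⟩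

lemma qp_sums [HasColimits C] [AB5 C] (h₁ : IsLocalizing P₁) (h₂ : IsLocalizing P₂)
    {ι : Type v} (X : ι → C) (c : Cofan X) (hc : IsColimit c)
    (hall : ∀ i, QP P₁ P₂ (X i)) : QP P₁ P₂ c.pt := by
  choose Z f hf hZ hcok using hall
  haveI : HasFiniteBiproducts C := HasFiniteBiproducts.of_hasFiniteProducts
  haveI : AB4 C := AB4.of_AB5 C
  haveI : ∀ i, Mono (f i) := hf
  -- the coproduct of the `f i` is a mono
  have hmono : Mono (Limits.Sigma.map f) := by
    let τ : Discrete.functor Z ⟶ Discrete.functor X := Discrete.natTrans (fun i => f i.as)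
    haveI : ∀ j, Mono (τ.app j) := fun j => by dsimp [τ]; infer_instance
    haveI : Mono τ := NatTrans.mono_of_mono_app τ
    show Mono ((colim (J := Discrete ι) (C := C)).map τ)
    exact Functor.map_mono _ _
  haveI := hmono
  -- the cokernel of `Limits.Sigma.map f` is the coproduct of the cokernels
  have hzero : Limits.Sigma.map f ≫ Limits.Sigma.map (fun i => cokernel.π (f i)) = 0 := by
    ext i
    simp
  let φ : cokernel (Limits.Sigma.map f) ⟶ ∐ (fun i => cokernel (f i)) :=
    cokernel.desc (Limits.Sigma.map f) (Limits.Sigma.map (fun i => cokernel.π (f i))) hzero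
  have hψc : ∀ i, f i ≫ Sigma.ι X i ≫ cokernel.π (Limits.Sigma.map f) = 0 := by
    intro i
    rw [← Category.assoc]
    have : f i ≫ Sigma.ι X i = Sigma.ι Z i ≫ Limits.Sigma.map f := by simp
    rw [this, Category.assoc, cokernel.condition, comp_zero]
  let ψ : (∐ (fun i => cokernel (f i))) ⟶ cokernel (Limits.Sigma.map f) :=
    Sigma.desc (fun i => cokernel.desc (f i) (Sigma.ι X i ≫ cokernel.π (Limits.Sigma.map f)) (hψc i))
  have hiso : IsIso φ := by
    refine ⟨ψ, ?_, ?_⟩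
    · apply coequalizer.hom_ext
      simp only [φ, ψ, Category.assoc, cokernel.π_desc, Category.comp_id]
      apply colimit.hom_ext
      rintro ⟨i⟩
      simp
    · apply colimit.hom_ext
      rintro ⟨i⟩
      rw [Category.comp_id, ← Category.assoc]
      have hι : Sigma.ι (fun i => cokernel (f i)) i ≫ ψ =
          cokernel.desc (f i) (Sigma.ι X i ≫ cokernel.π (Limits.Sigma.map f)) (hψc i) :=
        Sigma.ι_desc _ _
      rw [hι]
      apply coequalizer.hom_ext
      simp [φ]
  have hP₁ : P₁ (∐ Z) := h₁.sums Z (Cofan.mk _ (Sigma.ι Z)) (coproductIsCoproduct Z) hZ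
  have hcoker : P₂ (∐ (fun i => cokernel (f i))) :=
    h₂.sums _ (Cofan.mk _ (Sigma.ι _)) (coproductIsCoproduct _) hcok
  have hQ : QP P₁ P₂ (∐ X) :=
    ⟨∐ Z, Limits.Sigma.map f, hmono, hP₁, h₂.iso (@asIso _ _ _ _ φ hiso).symm hcoker⟩
  exact qp_iso h₂.toIsSerre ((coproductIsCoproduct X).coconePointUniqueUpToIso hc) hQ

lemma aux_image_comp_cokernel_π {A B : C} (u : A ⟶ B) :
    u ≫ cokernel.π (Abelian.image.ι u) = 0 := by
  have h2 := cokernel.condition (Abelian.image.ι u)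
  have h3 := Abelian.image.fac u
  calc u ≫ cokernel.π (Abelian.image.ι u)
      = (Abelian.factorThruImage u ≫ Abelian.image.ι u) ≫ cokernel.π (Abelian.image.ι u) := by
        rw [h3]
    _ = Abelian.factorThruImage u ≫ Abelian.image.ι u ≫ cokernel.π (Abelian.image.ι u) :=
        Category.assoc _ _ _
    _ = 0 := by rw [h2, comp_zero]


lemma qp_zero (h₁ : IsSerre P₁) (h₂ : IsSerre P₂) (X : C) (hX : IsZero X) : QP P₁ P₂ X :=
  ⟨X, 𝟙 X, inferInstance, h₁.zero X hX,
    h₂.zero _ ((isZero_zero C).of_iso (cokernel.ofEpi (𝟙 X)))⟩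

lemma qp_sub (h₁ : IsSerre P₁) (h₂ : IsSerre P₂) {X Y : C} (m : X ⟶ Y) (hm : Mono m)
    (hQ : QP P₁ P₂ Y) : QP P₁ P₂ X := by
  obtain ⟨Z, f, hf, hZ, hc⟩ := hQ
  haveI := hf; haveI := hm
  exact ⟨pullback f m, pullback.snd f m, inferInstance,
    h₁.sub (pullback.fst f m) inferInstance hZ,
    h₂.sub (cokernel.desc (pullback.snd f m) (m ≫ cokernel.π f)
      (aux_pullback_snd_comp_cokernel_π f m)) (aux_mono_cokernel_desc_pullback f m) hc⟩

lemma qp_quot (h₁ : IsSerre P₁) (h₂ : IsSerre P₂) {X Y : C} (q : X ⟶ Y) (hq : Epi q)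
    (hQ : QP P₁ P₂ X) : QP P₁ P₂ Y := by
  obtain ⟨Z, f, hf, hZ, hc⟩ := hQ
  haveI := hf; haveI := hq
  have hψ0 : f ≫ q ≫ cokernel.π (Abelian.image.ι (f ≫ q)) = 0 := by
    rw [← Category.assoc]; exact aux_image_comp_cokernel_π (f ≫ q)
  have hepi : Epi (cokernel.desc f (q ≫ cokernel.π (Abelian.image.ι (f ≫ q))) hψ0) := by
    have h : Epi (cokernel.π f ≫
        cokernel.desc f (q ≫ cokernel.π (Abelian.image.ι (f ≫ q))) hψ0) := by
      rw [cokernel.π_desc]; exact epi_comp _ _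
    exact @epi_of_epi _ _ _ _ _ _ _ h
  exact ⟨Abelian.image (f ≫ q), Abelian.image.ι (f ≫ q), inferInstance,
    h₁.quot (Abelian.factorThruImage (f ≫ q)) inferInstance hZ,
    h₂.quot _ hepi hc⟩

set_option maxHeartbeats 3000000 in
lemma qp_ext [HasColimits C] [WellPowered.{v} C]
    (h₁ : IsStableLocalizing P₁) (h₂ : IsStableLocalizing P₂)
    (hdisj : ∀ X : C, P₁ X → P₂ X → IsZero X)
    (S : ShortComplex C) (hS : S.ShortExact)
    (hQ₁ : QP P₁ P₂ S.X₁) (hQ₃ : QP P₁ P₂ S.X₃) : QP P₁ P₂ S.X₂ := by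
  haveI := hS.mono_f
  haveI := hS.epi_g
  obtain ⟨Z₁, f₁, hf₁, hZ₁, hc₁⟩ := hQ₁
  obtain ⟨Z₃, f₃, hf₃, hZ₃, hc₃⟩ := hQ₃
  haveI := hf₁; haveI := hf₃
  set g₁ : Z₁ ⟶ S.X₂ := f₁ ≫ S.f with hg₁def
  haveI : Mono g₁ := mono_comp _ _
  have hι₀ : f₁ ≫ S.f ≫ cokernel.π g₁ = 0 := by
    rw [← Category.assoc, ← hg₁def, cokernel.condition]
  set ιhat : cokernel f₁ ⟶ cokernel g₁ := cokernel.desc f₁ (S.f ≫ cokernel.π g₁) hι₀ with hιdef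
  have hιfac : cokernel.π f₁ ≫ ιhat = S.f ≫ cokernel.π g₁ := cokernel.π_desc _ _ _
  have hp₀ : g₁ ≫ S.g = 0 := by rw [hg₁def, Category.assoc, S.zero, comp_zero]
  set phat : cokernel g₁ ⟶ S.X₃ := cokernel.desc g₁ S.g hp₀ with hpdef
  have hpfac : cokernel.π g₁ ≫ phat = S.g := cokernel.π_desc _ _ _
  haveI hphatepi : Epi phat := by
    have h : Epi (cokernel.π g₁ ≫ phat) := by rw [hpfac]; infer_instance
    exact @epi_of_epi _ _ _ _ _ _ _ h
  haveI hιmono : Mono ιhat := by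
    apply mono_of_zero_of_map_zero
    intro a ha
    obtain ⟨y, hy⟩ := pseudo_surjective_of_epi (cokernel.π f₁) a
    have h1 : pseudoApply (cokernel.π g₁) (pseudoApply S.f y) = 0 := by
      rw [← Abelian.Pseudoelement.comp_apply, ← hιfac, Abelian.Pseudoelement.comp_apply, hy, ha]
    obtain ⟨z, hz⟩ := pseudo_exact_of_exact
      (S := ShortComplex.mk g₁ (cokernel.π g₁) (cokernel.condition g₁))
      (ShortComplex.exact_of_g_is_cokernel _ (cokernelIsCokernel g₁)) _ h1
    have hz' : pseudoApply S.f (pseudoApply f₁ z) = pseudoApply S.f y := by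
      rw [← Abelian.Pseudoelement.comp_apply]; exact hz
    have hz'' : pseudoApply f₁ z = y := pseudo_injective_of_mono S.f hz'
    rw [← hy, ← hz'', ← Abelian.Pseudoelement.comp_apply, cokernel.condition, Abelian.Pseudoelement.zero_apply]
  have hSE1 : (ShortComplex.mk ιhat phat (by
      rw [← cancel_epi (cokernel.π f₁), ← Category.assoc, hιfac, Category.assoc, hpfac,
        S.zero, comp_zero])).ShortExact := by
    refine ShortComplex.ShortExact.mk' ?_ hιmono hphatepi
    apply exact_of_pseudo_exact
    intro b hb
    have hb' : pseudoApply phat b = 0 := hb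
    obtain ⟨y, hy⟩ := pseudo_surjective_of_epi (cokernel.π g₁) b
    have h1 : pseudoApply S.g y = 0 := by
      rw [← hpfac, Abelian.Pseudoelement.comp_apply, hy, hb']
    obtain ⟨x₁, hx₁⟩ := pseudo_exact_of_exact hS.exact y h1
    refine ⟨pseudoApply (cokernel.π f₁) x₁, ?_⟩
    show pseudoApply ιhat (pseudoApply (cokernel.π f₁) x₁) = b
    rw [← Abelian.Pseudoelement.comp_apply, hιfac, Abelian.Pseudoelement.comp_apply, hx₁, hy]
  -- the `P₁`-torsion subobject of `cokernel g₁`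
  obtain ⟨t, ht⟩ := aux_exists_torsion h₁.toIsLocalizing (cokernel g₁)
  have hc₂mono : Mono (ιhat ≫ cokernel.π t.arrow) :=
    aux_mono_comp_cokernel_π h₁.toIsSerre h₂.toIsSerre hdisj t ht.1 ιhat hc₁
  set c₂ : cokernel f₁ ⟶ cokernel t.arrow := ιhat ≫ cokernel.π t.arrow with hc₂def
  haveI := hc₂mono
  haveI : HasCokernel c₂ := HasCokernels.has_colimit c₂
  have hσ0 : ιhat ≫ cokernel.π t.arrow ≫ cokernel.π c₂ = 0 := by
    rw [← Category.assoc, ← hc₂def, cokernel.condition]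
  obtain ⟨σ, hσfac⟩ := CokernelCofork.IsColimit.desc' hSE1.gIsCokernel
    (cokernel.π t.arrow ≫ cokernel.π c₂) hσ0
  haveI hσepi : Epi σ := by
    have h : Epi (phat ≫ σ) := by
      rw [show phat ≫ σ = cokernel.π t.arrow ≫ cokernel.π c₂ from hσfac]
      exact epi_comp _ _
    exact @epi_of_epi _ _ _ _ _ _ _ h
  have hI : P₁ (Abelian.image (f₃ ≫ σ)) :=
    h₁.quot (Abelian.factorThruImage (f₃ ≫ σ)) inferInstance hZ₃
  have hcokI : P₂ (cokernel (Abelian.image.ι (f₃ ≫ σ))) := by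
    have h0 : f₃ ≫ σ ≫ cokernel.π (Abelian.image.ι (f₃ ≫ σ)) = 0 := by
      rw [← Category.assoc]; exact aux_image_comp_cokernel_π (f₃ ≫ σ)
    have hepi : Epi (cokernel.desc f₃ (σ ≫ cokernel.π (Abelian.image.ι (f₃ ≫ σ))) h0) := by
      have h : Epi (cokernel.π f₃ ≫
          cokernel.desc f₃ (σ ≫ cokernel.π (Abelian.image.ι (f₃ ≫ σ))) h0) := by
        rw [cokernel.π_desc]; exact epi_comp _ _
      exact @epi_of_epi _ _ _ _ _ _ _ h
    exact h₂.quot _ hepi hc₃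
  have hkerM : P₂ (kernel (pullback.fst (Abelian.image.ι (f₃ ≫ σ)) (cokernel.π c₂))) :=
    h₂.iso ((auxKernelPullbackFstIso (Abelian.image.ι (f₃ ≫ σ)) (cokernel.π c₂)).trans
      (auxKernelCokernelπIso c₂)).symm hc₁
  have hcoim : P₁ (cokernel (kernel.ι (pullback.fst (Abelian.image.ι (f₃ ≫ σ))
      (cokernel.π c₂)))) := by
    have hmono : Mono (cokernel.desc (kernel.ι (pullback.fst (Abelian.image.ι (f₃ ≫ σ))
        (cokernel.π c₂))) (pullback.fst (Abelian.image.ι (f₃ ≫ σ)) (cokernel.π c₂))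
        (kernel.condition _)) := by
      apply mono_of_zero_of_map_zero
      intro x hx
      obtain ⟨m', hm'⟩ := pseudo_surjective_of_epi (cokernel.π (kernel.ι (pullback.fst
        (Abelian.image.ι (f₃ ≫ σ)) (cokernel.π c₂)))) x
      have h1 : pseudoApply (pullback.fst (Abelian.image.ι (f₃ ≫ σ)) (cokernel.π c₂)) m' = 0 := by
        rw [← cokernel.π_desc (kernel.ι (pullback.fst (Abelian.image.ι (f₃ ≫ σ))
          (cokernel.π c₂))) (pullback.fst (Abelian.image.ι (f₃ ≫ σ)) (cokernel.π c₂))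
          (kernel.condition _), Abelian.Pseudoelement.comp_apply, hm', hx]
      obtain ⟨k, hk⟩ := pseudo_exact_of_exact
        (S := ShortComplex.mk (kernel.ι (pullback.fst (Abelian.image.ι (f₃ ≫ σ))
          (cokernel.π c₂))) (pullback.fst (Abelian.image.ι (f₃ ≫ σ)) (cokernel.π c₂))
          (kernel.condition _))
        (ShortComplex.exact_of_f_is_kernel _ (kernelIsKernel _)) _ h1
      rw [← hm', ← hk, ← Abelian.Pseudoelement.comp_apply, cokernel.condition, Abelian.Pseudoelement.zero_apply]
    have hepi : Epi (cokernel.desc (kernel.ι (pullback.fst (Abelian.image.ι (f₃ ≫ σ))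
        (cokernel.π c₂))) (pullback.fst (Abelian.image.ι (f₃ ≫ σ)) (cokernel.π c₂))
        (kernel.condition _)) := by
      have h : Epi (cokernel.π _ ≫ cokernel.desc (kernel.ι (pullback.fst
          (Abelian.image.ι (f₃ ≫ σ)) (cokernel.π c₂))) (pullback.fst
          (Abelian.image.ι (f₃ ≫ σ)) (cokernel.π c₂)) (kernel.condition _)) := by
        rw [cokernel.π_desc]; infer_instance
      exact @epi_of_epi _ _ _ _ _ _ _ h
    haveI := hmono; haveI := hepi
    haveI := isIso_of_mono_of_epi (cokernel.desc (kernel.ι (pullback.fst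
      (Abelian.image.ι (f₃ ≫ σ)) (cokernel.π c₂))) (pullback.fst
      (Abelian.image.ι (f₃ ≫ σ)) (cokernel.π c₂)) (kernel.condition _))
    exact h₁.iso (asIso (cokernel.desc (kernel.ι (pullback.fst
      (Abelian.image.ι (f₃ ≫ σ)) (cokernel.π c₂))) (pullback.fst
      (Abelian.image.ι (f₃ ≫ σ)) (cokernel.π c₂)) (kernel.condition _))).symm hI
  have hM : P₂ (pullback (Abelian.image.ι (f₃ ≫ σ)) (cokernel.π c₂)) := by
    refine aux_absorb h₂ h₁.toIsSerre
      (kernel.ι (pullback.fst (Abelian.image.ι (f₃ ≫ σ)) (cokernel.π c₂))) hkerM hcoim ?_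
    intro W w hw hW
    haveI := hw
    haveI : Mono (w ≫ pullback.snd (Abelian.image.ι (f₃ ≫ σ)) (cokernel.π c₂)) := mono_comp _ _
    exact aux_torsionfree h₁.toIsLocalizing t ht
      (w ≫ pullback.snd (Abelian.image.ι (f₃ ≫ σ)) (cokernel.π c₂)) hW
  have hcoksnd : P₂ (cokernel (pullback.snd (Abelian.image.ι (f₃ ≫ σ)) (cokernel.π c₂))) :=
    h₂.iso (auxCokernelPullbackSndIso (Abelian.image.ι (f₃ ≫ σ)) (cokernel.π c₂)).symm hcokI
  have hN : P₂ (cokernel t.arrow) := by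
    have hSE2 : (ShortComplex.mk (pullback.snd (Abelian.image.ι (f₃ ≫ σ)) (cokernel.π c₂))
        (cokernel.π (pullback.snd (Abelian.image.ι (f₃ ≫ σ)) (cokernel.π c₂)))
        (cokernel.condition _)).ShortExact :=
      ShortComplex.ShortExact.mk' (ShortComplex.exact_of_g_is_cokernel _ (cokernelIsCokernel _))
        inferInstance inferInstance
    exact h₂.ext _ hSE2 hM hcoksnd
  -- assemble the extension exhibiting `QP P₁ P₂ S.X₂`
  have hkerA : P₁ (kernel (pullback.fst t.arrow (cokernel.π g₁))) :=
    h₁.iso ((auxKernelPullbackFstIso t.arrow (cokernel.π g₁)).trans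
      (auxKernelCokernelπIso g₁)).symm hZ₁
  have hA : P₁ (pullback t.arrow (cokernel.π g₁)) := by
    have hSE3 : (ShortComplex.mk (kernel.ι (pullback.fst t.arrow (cokernel.π g₁)))
        (pullback.fst t.arrow (cokernel.π g₁)) (kernel.condition _)).ShortExact :=
      ShortComplex.ShortExact.mk' (ShortComplex.exact_of_f_is_kernel _ (kernelIsKernel _))
        inferInstance inferInstance
    exact h₁.ext _ hSE3 hkerA ht.1
  exact ⟨pullback t.arrow (cokernel.π g₁), pullback.snd t.arrow (cokernel.π g₁), inferInstance,
    hA, h₂.iso (auxCokernelPullbackSndIso t.arrow (cokernel.π g₁)).symm hN⟩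

lemma qp_of_p₁ (h₂ : IsSerre P₂) {X : C} (hX : P₁ X) : QP P₁ P₂ X :=
  ⟨X, 𝟙 X, inferInstance, hX, h₂.zero _ ((isZero_zero C).of_iso (cokernel.ofEpi (𝟙 X)))⟩

lemma qp_of_p₂ (h₁ : IsSerre P₁) (h₂ : IsSerre P₂) {X : C} (hX : P₂ X) : QP P₁ P₂ X := by
  open ZeroObject in
  have hmono : Mono (0 : (0 : C) ⟶ X) := ⟨fun g h _ => (isZero_zero C).eq_of_tgt g h⟩
  exact ⟨0, 0, hmono, h₁.zero _ (isZero_zero C), h₂.iso cokernelZeroIsoTarget.symm hX⟩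

lemma qp_isLocalizing [HasColimits C] [AB5 C] [WellPowered.{v} C]
    (h₁ : IsStableLocalizing P₁) (h₂ : IsStableLocalizing P₂)
    (hdisj : ∀ X : C, P₁ X → P₂ X → IsZero X) : IsLocalizing (QP P₁ P₂) :=
  ⟨⟨qp_zero h₁.toIsSerre h₂.toIsSerre,
    fun e h => qp_iso h₂.toIsSerre e h,
    fun f hf h => qp_sub h₁.toIsSerre h₂.toIsSerre f hf h,
    fun f hf h => qp_quot h₁.toIsSerre h₂.toIsSerre f hf h,
    fun S hS hq1 hq3 => qp_ext h₁ h₂ hdisj S hS hq1 hq3⟩,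
    fun X c hc hall => qp_sums h₁.toIsLocalizing h₂.toIsLocalizing X c hc hall⟩

set_option maxHeartbeats 1000000 in
lemma main_sup_eq_top [HasColimits C] [AB5 C] [WellPowered.{v} C]
    {P₃ : C → Prop}
    (h₁ : IsStableLocalizing P₁) (h₂ : IsStableLocalizing P₂)
    (hdisj : ∀ X : C, P₁ X → P₂ X → IsZero X)
    (hjoin : IsJoin P₁ P₂ P₃)
    {Y : C} (hY : P₃ Y) (v₁ v₂ : Subobject Y)
    (hv₁ : IsTorsionSubobject P₁ v₁) (hv₂ : IsTorsionSubobject P₂ v₂) :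
    v₁ ⊔ v₂ = ⊤ := by
  obtain ⟨hP₃, hinc₁, hinc₂, hmin⟩ := hjoin
  have hQY : QP P₁ P₂ Y := hmin (QP P₁ P₂) (qp_isLocalizing h₁ h₂ hdisj)
    (fun X hX => qp_of_p₁ h₂.toIsSerre hX)
    (fun X hX => qp_of_p₂ h₁.toIsSerre h₂.toIsSerre hX) Y hY
  obtain ⟨Z, f, hf, hZ, hcokf⟩ := hQY
  haveI := hf
  have hmkle : Subobject.mk f ≤ v₁ :=
    hv₁.2 _ (h₁.iso (Subobject.underlyingIso f).symm hZ)
  have hfπ : f ≫ cokernel.π v₁.arrow = 0 := by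
    rw [← Subobject.ofMkLE_arrow hmkle, Category.assoc, cokernel.condition, comp_zero]
  have hP₂cok1 : P₂ (cokernel v₁.arrow) := by
    have hepi : Epi (cokernel.desc f (cokernel.π v₁.arrow) hfπ) := by
      have h : Epi (cokernel.π f ≫ cokernel.desc f (cokernel.π v₁.arrow) hfπ) := by
        rw [cokernel.π_desc]; infer_instance
      exact @epi_of_epi _ _ _ _ _ _ _ h
    exact h₂.quot _ hepi hcokf
  have hc : Mono (v₁.arrow ≫ cokernel.π v₂.arrow) :=
    aux_mono_comp_cokernel_π h₂.toIsSerre h₁.toIsSerre (fun X a b => hdisj X b a) v₂ hv₂.1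
      v₁.arrow hv₁.1
  haveI := hc
  have hcokc : P₂ (cokernel (v₁.arrow ≫ cokernel.π v₂.arrow)) := by
    have h0 : v₁.arrow ≫ cokernel.π v₂.arrow ≫
        cokernel.π (v₁.arrow ≫ cokernel.π v₂.arrow) = 0 := by
      rw [← Category.assoc, cokernel.condition]
    have hepi : Epi (cokernel.desc v₁.arrow
        (cokernel.π v₂.arrow ≫ cokernel.π (v₁.arrow ≫ cokernel.π v₂.arrow)) h0) := by
      have h : Epi (cokernel.π v₁.arrow ≫ cokernel.desc v₁.arrow
          (cokernel.π v₂.arrow ≫ cokernel.π (v₁.arrow ≫ cokernel.π v₂.arrow)) h0) := by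
        rw [cokernel.π_desc]; exact epi_comp _ _
      exact @epi_of_epi _ _ _ _ _ _ _ h
    exact h₂.quot _ hepi hP₂cok1
  have hP₁cok2 : P₁ (cokernel v₂.arrow) := by
    refine aux_absorb h₁ h₂.toIsSerre (v₁.arrow ≫ cokernel.π v₂.arrow) hv₁.1 hcokc ?_
    intro W w hw hW
    haveI := hw
    exact aux_torsionfree h₂.toIsLocalizing v₂ hv₂ w hW
  have harr₁ : v₁.arrow ≫ cokernel.π (v₁ ⊔ v₂).arrow = 0 := by
    rw [← Subobject.ofLE_arrow (le_sup_left : v₁ ≤ v₁ ⊔ v₂), Category.assoc, cokernel.condition,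
      comp_zero]
  have harr₂ : v₂.arrow ≫ cokernel.π (v₁ ⊔ v₂).arrow = 0 := by
    rw [← Subobject.ofLE_arrow (le_sup_right : v₂ ≤ v₁ ⊔ v₂), Category.assoc, cokernel.condition,
      comp_zero]
  have hZ₂ : P₂ (cokernel (v₁ ⊔ v₂).arrow) := by
    have hepi : Epi (cokernel.desc v₁.arrow (cokernel.π (v₁ ⊔ v₂).arrow) harr₁) := by
      have h : Epi (cokernel.π v₁.arrow ≫
          cokernel.desc v₁.arrow (cokernel.π (v₁ ⊔ v₂).arrow) harr₁) := by
        rw [cokernel.π_desc]; infer_instance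
      exact @epi_of_epi _ _ _ _ _ _ _ h
    exact h₂.quot _ hepi hP₂cok1
  have hZ₁ : P₁ (cokernel (v₁ ⊔ v₂).arrow) := by
    have hepi : Epi (cokernel.desc v₂.arrow (cokernel.π (v₁ ⊔ v₂).arrow) harr₂) := by
      have h : Epi (cokernel.π v₂.arrow ≫
          cokernel.desc v₂.arrow (cokernel.π (v₁ ⊔ v₂).arrow) harr₂) := by
        rw [cokernel.π_desc]; infer_instance
      exact @epi_of_epi _ _ _ _ _ _ _ h
    exact h₁.quot _ hepi hP₁cok2
  have hzero : IsZero (cokernel (v₁ ⊔ v₂).arrow) := hdisj _ hZ₁ hZ₂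
  have hπ0 : cokernel.π (v₁ ⊔ v₂).arrow = 0 := hzero.eq_of_tgt _ _
  have hle : (⊤ : Subobject Y) ≤ v₁ ⊔ v₂ := by
    refine aux_le_of_comp_cokernel_π_eq_zero ?_
    rw [hπ0, comp_zero]
  exact le_antisymm le_top hle

end Aux

/-- If `L₁`, `L₂` are stable localizing subcategories of a
Grothendieck category with `L₁ ∩ L₂ = 0`, then for every object `X` we have
`t_{L₁∨L₂}(X) = t_{L₁}(X) ⊕ t_{L₂}(X)` (an internal direct sum of subobjects),
and `t_{L₁}(t_{L₂}(X)) = 0 = t_{L₂}(t_{L₁}(X))`. -/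
theorem torsion_of_join
    [HasColimits C] [AB5 C] (hsep : ∃ G : C, IsSeparator G)
    (P₁ P₂ P₃ : C → Prop) (h₁ : IsStableLocalizing P₁) (h₂ : IsStableLocalizing P₂)
    (hdisj : ∀ X : C, P₁ X → P₂ X → IsZero X)
    (hjoin : IsJoin P₁ P₂ P₃)
    (X : C) (t₁ t₂ t₃ : Subobject X)
    (ht₁ : IsTorsionSubobject P₁ t₁) (ht₂ : IsTorsionSubobject P₂ t₂)
    (ht₃ : IsTorsionSubobject P₃ t₃)
    (s₁ : Subobject ((t₂ : C))) (hs₁ : IsTorsionSubobject P₁ s₁)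
    (s₂ : Subobject ((t₁ : C))) (hs₂ : IsTorsionSubobject P₂ s₂) :
    t₃ = t₁ ⊔ t₂ ∧ t₁ ⊓ t₂ = ⊥ ∧ IsZero ((s₁ : C)) ∧ IsZero ((s₂ : C)) := by
  obtain ⟨G, hG⟩ := hsep
  haveI : WellPowered.{v} C := wellPowered_of_isDetector G hG.isDetector
  have hs₁zero : IsZero ((s₁ : C)) := hdisj _ hs₁.1 (h₂.sub s₁.arrow inferInstance ht₂.1)
  have hs₂zero : IsZero ((s₂ : C)) := hdisj _ (h₁.sub s₂.arrow inferInstance ht₁.1) hs₂.1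
  have hinf : t₁ ⊓ t₂ = ⊥ := by
    apply aux_eq_bot_of_isZero
    have hm₁ : Mono (Subobject.factorThru t₁ (t₁ ⊓ t₂).arrow
        (Subobject.inf_arrow_factors_left t₁ t₂)) := by
      have h : Mono (Subobject.factorThru t₁ (t₁ ⊓ t₂).arrow
          (Subobject.inf_arrow_factors_left t₁ t₂) ≫ t₁.arrow) := by
        rw [Subobject.factorThru_arrow]; infer_instance
      exact mono_of_mono _ t₁.arrow
    have hm₂ : Mono (Subobject.factorThru t₂ (t₁ ⊓ t₂).arrow
        (Subobject.inf_arrow_factors_right t₁ t₂)) := by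
      have h : Mono (Subobject.factorThru t₂ (t₁ ⊓ t₂).arrow
          (Subobject.inf_arrow_factors_right t₁ t₂) ≫ t₂.arrow) := by
        rw [Subobject.factorThru_arrow]; infer_instance
      exact mono_of_mono _ t₂.arrow
    exact hdisj _ (h₁.sub _ hm₁ ht₁.1) (h₂.sub _ hm₂ ht₂.1)
  have h13 : t₁ ≤ t₃ := ht₃.2 t₁ (hjoin.2.1 _ ht₁.1)
  have h23 : t₂ ≤ t₃ := ht₃.2 t₂ (hjoin.2.2.1 _ ht₂.1)
  have hmain : t₃ = t₁ ⊔ t₂ := by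
    refine le_antisymm ?_ (sup_le h13 h23)
    set v₁ : Subobject ((t₃ : C)) := Subobject.mk (Subobject.ofLE t₁ t₃ h13) with hv₁def
    set v₂ : Subobject ((t₃ : C)) := Subobject.mk (Subobject.ofLE t₂ t₃ h23) with hv₂def
    have hv₁ : IsTorsionSubobject P₁ v₁ := by
      constructor
      · exact h₁.iso (Subobject.underlyingIso _).symm ht₁.1
      · intro s hs
        have hle : Subobject.mk (s.arrow ≫ t₃.arrow) ≤ t₁ :=
          ht₁.2 _ (h₁.iso (Subobject.underlyingIso _).symm hs)
        rw [hv₁def]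
        refine Subobject.le_mk_of_comm (Subobject.ofMkLE (s.arrow ≫ t₃.arrow) t₁ hle) ?_
        rw [← cancel_mono t₃.arrow, Category.assoc, Subobject.ofLE_arrow,
          Subobject.ofMkLE_arrow hle]
    have hv₂ : IsTorsionSubobject P₂ v₂ := by
      constructor
      · exact h₂.iso (Subobject.underlyingIso _).symm ht₂.1
      · intro s hs
        have hle : Subobject.mk (s.arrow ≫ t₃.arrow) ≤ t₂ :=
          ht₂.2 _ (h₂.iso (Subobject.underlyingIso _).symm hs)
        rw [hv₂def]
        refine Subobject.le_mk_of_comm (Subobject.ofMkLE (s.arrow ≫ t₃.arrow) t₂ hle) ?_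
        rw [← cancel_mono t₃.arrow, Category.assoc, Subobject.ofLE_arrow,
          Subobject.ofMkLE_arrow hle]
    have hsup : v₁ ⊔ v₂ = ⊤ :=
      main_sup_eq_top h₁ h₂ hdisj hjoin ht₃.1 v₁ v₂ hv₁ hv₂
    have e₁ : t₁.arrow ≫ cokernel.π (t₁ ⊔ t₂).arrow = 0 := by
      rw [← Subobject.ofLE_arrow (le_sup_left : t₁ ≤ t₁ ⊔ t₂), Category.assoc,
        cokernel.condition, comp_zero]
    have e₂ : t₂.arrow ≫ cokernel.π (t₁ ⊔ t₂).arrow = 0 := by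
      rw [← Subobject.ofLE_arrow (le_sup_right : t₂ ≤ t₁ ⊔ t₂), Category.assoc,
        cokernel.condition, comp_zero]
    have hv₁0 : v₁.arrow ≫ t₃.arrow ≫ cokernel.π (t₁ ⊔ t₂).arrow = 0 := by
      rw [hv₁def, aux_mk_arrow_comp]
      have h' : Subobject.ofLE t₁ t₃ h13 ≫ t₃.arrow ≫ cokernel.π (t₁ ⊔ t₂).arrow = 0 := by
        rw [← Category.assoc, Subobject.ofLE_arrow, e₁]
      rw [h', comp_zero]
    have hv₂0 : v₂.arrow ≫ t₃.arrow ≫ cokernel.π (t₁ ⊔ t₂).arrow = 0 := by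
      rw [hv₂def, aux_mk_arrow_comp]
      have h' : Subobject.ofLE t₂ t₃ h23 ≫ t₃.arrow ≫ cokernel.π (t₁ ⊔ t₂).arrow = 0 := by
        rw [← Category.assoc, Subobject.ofLE_arrow, e₂]
      rw [h', comp_zero]
    have hsupcomp : (v₁ ⊔ v₂).arrow ≫ (t₃.arrow ≫ cokernel.π (t₁ ⊔ t₂).arrow) = 0 :=
      aux_sup_arrow_comp_eq_zero hv₁0 hv₂0
    rw [hsup] at hsupcomp
    have htop : (⊤ : Subobject ((t₃ : C))).arrow ≫ (t₃.arrow ≫ cokernel.π (t₁ ⊔ t₂).arrow) =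
        (⊤ : Subobject ((t₃ : C))).arrow ≫ 0 := by rw [hsupcomp, comp_zero]
    have hfinal : t₃.arrow ≫ cokernel.π (t₁ ⊔ t₂).arrow = 0 := (cancel_epi _).1 htop
    exact aux_le_of_comp_cokernel_π_eq_zero hfinal
  exact ⟨hmain, hinf, hs₁zero, hs₂zero⟩

end CentralSheaf
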